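/- Let μ₁, …, μ_m be the zeros of 𝓕, numbered so that σ_j < μ_j < σ_{j+1} for j = 1, …, m−1 and σ_m < μ_m < ∞. Then {λ ∈ ℝ ∖ {σ₁, …, σ_m} : λ𝓕(λ) ≥ 0} = [0, σ₁) ∪ (⋃_{j=1}^{m−1} [μ_j, σ_{j+1})) ∪ [μ_m, ∞). -/

import Mathlib

/-!
STATEMENT 7: with μ_j the zeros of 𝓕 (σ_j < μ_j < σ_{j+1}, σ_m < μ_m < ∞),
{λ ∈ ℝ ∖ {σ_1,…,σ_m} : λ𝓕(λ) ≥ 0}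
  = [0, σ_1) ∪ ⋃_{j=1}^{m−1} [μ_j, σ_{j+1}) ∪ [μ_m, ∞).
(Indices are 0-based.)
-/

theorem nonneg_set_of_lambda_F
    (m : ℕ) (hm : 1 ≤ m)
    (σ ρ : ℕ → ℝ)
    (hσ0 : 0 < σ 0)
    (hσmono : ∀ j, j + 1 < m → σ j < σ (j + 1))
    (hρ : ∀ j, j < m → 0 < ρ j)
    (F : ℝ → ℝ)
    (hF : ∀ lam : ℝ, F lam = 1 + ∑ j ∈ Finset.range m, σ j * ρ j / (σ j - lam))
    (μ : ℕ → ℝ)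
    (hμzero : ∀ j, j < m → F (μ j) = 0)
    (hμlow : ∀ j, j < m → σ j < μ j)
    (hμhigh : ∀ j, j + 1 < m → μ j < σ (j + 1)) :
    {lam : ℝ | (∀ j, j < m → lam ≠ σ j) ∧ 0 ≤ lam * F lam} =
      Set.Ico 0 (σ 0) ∪
        (⋃ (j : ℕ) (_ : j + 1 < m), Set.Ico (μ j) (σ (j + 1))) ∪
        Set.Ici (μ (m - 1)) := by
  classical
  -- σ is strictly increasing on indices < m
  have hσlt' : ∀ l, l < m → ∀ k, k < l → σ k < σ l := by
    intro l
    induction l with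
    | zero => intro _ k hk; omega
    | succ n ih =>
      intro hlm k hk
      rcases Nat.lt_succ_iff_lt_or_eq.mp hk with h | h
      · exact lt_trans (ih (by omega) k h) (hσmono n hlm)
      · rw [h]; exact hσmono n hlm
  have hσlt : ∀ k l, k < l → l < m → σ k < σ l := fun k l hkl hlm => hσlt' l hlm k hkl
  have hσle : ∀ k l, k ≤ l → l < m → σ k ≤ σ l := by
    intro k l hkl hlm
    rcases eq_or_lt_of_le hkl with rfl | h
    · exact le_refl _
    · exact le_of_lt (hσlt k l h hlm)
  have hσpos : ∀ k, k < m → 0 < σ k := by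
    intro k hk
    rcases Nat.eq_zero_or_pos k with h | h
    · subst h; exact hσ0
    · exact lt_trans hσ0 (hσlt 0 k h hk)
  -- strict monotonicity of F where all (σ j - ·) keep sign
  have key : ∀ a b : ℝ, a < b → (∀ j, j < m → 0 < (σ j - a) * (σ j - b)) → F a < F b := by
    intro a b hab hsign
    rw [hF a, hF b]
    have hsum : ∑ j ∈ Finset.range m, σ j * ρ j / (σ j - a)
        < ∑ j ∈ Finset.range m, σ j * ρ j / (σ j - b) := by
      apply Finset.sum_lt_sum_of_nonempty (Finset.nonempty_range_iff.mpr (by omega))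
      intro j hj
      have hjm := Finset.mem_range.mp hj
      have hc : 0 < σ j * ρ j := mul_pos (hσpos j hjm) (hρ j hjm)
      have hs := hsign j hjm
      have ha : σ j - a ≠ 0 := by
        intro h; rw [h, zero_mul] at hs; exact lt_irrefl 0 hs
      have hb : σ j - b ≠ 0 := by
        intro h; rw [h, mul_zero] at hs; exact lt_irrefl 0 hs
      have hdiff : σ j * ρ j / (σ j - b) - σ j * ρ j / (σ j - a)
          = (σ j * ρ j) * (b - a) / ((σ j - a) * (σ j - b)) := by
        field_simp; ring
      have hpos : 0 < (σ j * ρ j) * (b - a) / ((σ j - a) * (σ j - b)) :=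
        div_pos (mul_pos hc (by linarith)) hs
      linarith [hdiff, hpos]
    linarith
  -- sign lemmas
  have sign_mid : ∀ j, j + 1 < m → ∀ x y : ℝ, σ j < x → x < σ (j + 1) → σ j < y → y < σ (j + 1) →
      ∀ k, k < m → 0 < (σ k - x) * (σ k - y) := by
    intro j hj x y hx1 hx2 hy1 hy2 k hk
    rcases le_or_gt k j with h | h
    · have hkj : σ k ≤ σ j := hσle k j h (by omega)
      exact mul_pos_of_neg_of_neg (by linarith) (by linarith)
    · have hkj : σ (j + 1) ≤ σ k := hσle (j + 1) k h hk
      exact mul_pos (by linarith) (by linarith)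
  have sign_top : ∀ x y : ℝ, σ (m - 1) < x → σ (m - 1) < y →
      ∀ k, k < m → 0 < (σ k - x) * (σ k - y) := by
    intro x y hx hy k hk
    have hkj : σ k ≤ σ (m - 1) := hσle k (m - 1) (by omega) (by omega)
    exact mul_pos_of_neg_of_neg (by linarith) (by linarith)
  -- F is positive below σ 0
  have Fpos_low : ∀ x : ℝ, x < σ 0 → 0 < F x := by
    intro x hx
    rw [hF x]
    have : (0:ℝ) ≤ ∑ j ∈ Finset.range m, σ j * ρ j / (σ j - x) := by
      apply Finset.sum_nonneg
      intro j hj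
      have hjm := Finset.mem_range.mp hj
      have h0j : σ 0 ≤ σ j := hσle 0 j (Nat.zero_le _) hjm
      exact le_of_lt (div_pos (mul_pos (hσpos j hjm) (hρ j hjm)) (by linarith))
    linarith
  -- F ≥ 0 at points ≥ μ j within (σ j, σ (j+1))
  have hm1 : m - 1 < m := by omega
  ext lam
  simp only [Set.mem_setOf_eq, Set.mem_union, Set.mem_Ico, Set.mem_Ici, Set.mem_iUnion]
  constructor
  · rintro ⟨hne, hpos⟩
    rcases lt_or_ge lam (σ 0) with hlow | hge0
    · -- case A
      left; left
      refine ⟨?_, hlow⟩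
      by_contra h
      push_neg at h
      have hF' := Fpos_low lam hlow
      nlinarith
    · have hgt0 : σ 0 < lam := lt_of_le_of_ne hge0 (Ne.symm (hne 0 (by omega)))
      rcases lt_or_ge (σ (m - 1)) lam with htop | hle
      · -- case C
        right
        have hlam0 : 0 < lam := lt_trans (hσpos (m-1) hm1) htop
        have hFge : 0 ≤ F lam := by
          by_contra h
          push_neg at h
          nlinarith
        by_contra hc
        push_neg at hc
        have := key lam (μ (m-1)) hc (sign_top lam (μ (m-1)) htop (hμlow (m-1) hm1))
        rw [hμzero (m-1) hm1] at this
        linarith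
      · -- case B: σ 0 < lam ≤ σ (m-1), lam ≠ σ k; find j with σ j < lam < σ (j+1)
        have hltm1 : lam < σ (m - 1) :=
          lt_of_le_of_ne hle (hne (m-1) hm1)
        set P : ℕ → Prop := fun k => σ k < lam with hP
        have hm1pos : 0 < m - 1 := by
          rcases Nat.eq_zero_or_pos (m - 1) with h | h
          · rw [h] at hltm1; linarith
          · exact h
        set j := Nat.findGreatest P (m - 1) with hj
        have hPj : P j := Nat.findGreatest_spec (Nat.zero_le _) (show P 0 from hgt0)
        have hjne : j ≠ m - 1 := by
          intro h
          rw [hj] at h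
          have : P (m - 1) := h ▸ hPj
          exact absurd this (not_lt.mpr (le_of_lt hltm1))
        have hjle : j ≤ m - 1 := Nat.findGreatest_le _
        have hjlt : j + 1 < m := by omega
        have hnP : ¬ P (j + 1) :=
          Nat.findGreatest_is_greatest (n := m-1) (k := j+1) (by omega) (by omega)
        have hlt1 : lam < σ (j + 1) :=
          lt_of_le_of_ne (not_lt.mp hnP) (hne (j+1) hjlt)
        have hσjlam : σ j < lam := hPj
        have hlam0 : 0 < lam := lt_trans hσ0 hgt0
        have hFge : 0 ≤ F lam := by
          by_contra h
          push_neg at h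
          nlinarith
        left; right
        refine ⟨j, hjlt, ?_, hlt1⟩
        by_contra hc
        push_neg at hc
        have := key lam (μ j) hc
          (sign_mid j hjlt lam (μ j) hσjlam hlt1 (hμlow j (by omega)) (hμhigh j hjlt))
        rw [hμzero j (by omega)] at this
        linarith
  · rintro ((⟨h0, h1⟩ | ⟨j, hjlt, h1, h2⟩) | h)
    · -- [0, σ 0)
      refine ⟨fun k hk hk' => ?_, ?_⟩
      · have := hσle 0 k (Nat.zero_le _) hk; linarith [hk' ▸ h1]
      · exact mul_nonneg h0 (le_of_lt (Fpos_low lam h1))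
    · -- [μ j, σ (j+1))
      have hσjμ : σ j < μ j := hμlow j (by omega)
      have hσjlam : σ j < lam := lt_of_lt_of_le hσjμ h1
      have hlam0 : 0 < lam := lt_trans (hσpos j (by omega)) hσjlam
      refine ⟨fun k hk hk' => ?_, ?_⟩
      · rcases le_or_gt k j with h | h
        · have := hσle k j h (by omega); rw [hk'] at hσjlam; linarith
        · have := hσle (j+1) k h hk; rw [hk'] at h2; linarith
      · have hFge : 0 ≤ F lam := by
          rcases eq_or_lt_of_le h1 with rfl | h1'
          · exact le_of_eq (hμzero j (by omega)).symm
          · have := key (μ j) lam h1'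
              (sign_mid j hjlt (μ j) lam hσjμ (hμhigh j hjlt) hσjlam h2)
            rw [hμzero j (by omega)] at this
            linarith
        exact mul_nonneg (le_of_lt hlam0) hFge
    · -- [μ (m-1), ∞)
      have hσμ : σ (m-1) < μ (m-1) := hμlow (m-1) hm1
      have hσlam : σ (m-1) < lam := lt_of_lt_of_le hσμ h
      have hlam0 : 0 < lam := lt_trans (hσpos (m-1) hm1) hσlam
      refine ⟨fun k hk hk' => ?_, ?_⟩
      · have := hσle k (m-1) (by omega) hm1; rw [hk'] at hσlam; linarith
      · have hFge : 0 ≤ F lam := by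
          rcases eq_or_lt_of_le h with rfl | h'
          · exact le_of_eq (hμzero (m-1) hm1).symm
          · have := key (μ (m-1)) lam h' (sign_top (μ (m-1)) lam hσμ hσlam)
            rw [hμzero (m-1) hm1] at this
            linarith
        exact mul_nonneg (le_of_lt hlam0) hFge
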